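/- Let g ∈ k[x₁,…,x_M] be a nonzero polynomial over a field k of characteristic 0. Then the quotient k[x₁,…,x_M]/Ann(g), where Ann(g) = {f : f(∂₁,…,∂_M)(g) = 0}, is a local Artinian Gorenstein algebra of socle degree deg(g). -/

import Mathlib

open MvPolynomial

/-- The differential operator on polynomials given by a single monomial `x^d`, namely
`∂^d := ∏ᵢ (∂/∂xᵢ)^{dᵢ}`. -/
noncomputable def applyMonomial (k : Type*) [Field k] {M : ℕ} (d : Fin M →₀ ℕ) :
    Module.End k (MvPolynomial (Fin M) k) :=
  ((List.finRange M).map (fun i =>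
    ((MvPolynomial.pderiv i).toLinearMap : Module.End k (MvPolynomial (Fin M) k)) ^ (d i))).prod

/-- The apolarity action `f ⋆ g := f(∂/∂x₁, …, ∂/∂x_M)(g)`. -/
noncomputable def dstar (k : Type*) [Field k] {M : ℕ} (f g : MvPolynomial (Fin M) k) :
    MvPolynomial (Fin M) k :=
  ∑ d ∈ f.support, f.coeff d • applyMonomial k d g

namespace Stmt19Aux

variable {k : Type*} [Field k] {M : ℕ}

local notation "P" => MvPolynomial (Fin M) k

lemma pderiv_pow_monomial (i : Fin M) (n : ℕ) (e : Fin M →₀ ℕ) (c : k) :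
    (((pderiv i).toLinearMap : Module.End k P) ^ n) (monomial e c) =
      monomial (e - Finsupp.single i n) (c * ((e i).descFactorial n : k)) := by
  induction n with
  | zero => simp
  | succ n ih =>
    rw [pow_succ', Module.End.mul_apply, ih]
    erw [pderiv_monomial]
    congr 1
    · rw [tsub_tsub, ← Finsupp.single_add]
    · rw [Finsupp.tsub_apply, Finsupp.single_apply, if_pos rfl, Nat.descFactorial_succ]
      push_cast; ring

lemma sum_single_not_mem (l : List (Fin M)) (d : Fin M →₀ ℕ) (i : Fin M) (hi : i ∉ l) :
    ((l.map (fun j => Finsupp.single j (d j))).sum) i = 0 := by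
  induction l with
  | nil => simp
  | cons j l ihl =>
    simp only [List.mem_cons, not_or] at hi
    simp only [List.map_cons, List.sum_cons, Finsupp.add_apply,
      Finsupp.single_apply, if_neg (hi.1 ∘ Eq.symm), ihl hi.2]

lemma list_prod_apply_monomial (l : List (Fin M)) (hl : l.Nodup) (d e : Fin M →₀ ℕ) (c : k) :
    ((l.map (fun i => ((pderiv i).toLinearMap : Module.End k P) ^ (d i))).prod) (monomial e c) =
      monomial (e - (l.map (fun i => Finsupp.single i (d i))).sum)
        (c * ((l.map (fun i => (e i).descFactorial (d i))).prod : ℕ)) := by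
  induction l with
  | nil => simp
  | cons i l ih =>
    have hi : i ∉ l := (List.nodup_cons.mp hl).1
    have hl' : l.Nodup := (List.nodup_cons.mp hl).2
    simp only [List.map_cons, List.prod_cons, List.sum_cons, Module.End.mul_apply, ih hl',
      pderiv_pow_monomial]
    congr 1
    · rw [tsub_tsub, add_comm]
    · rw [Finsupp.tsub_apply, sum_single_not_mem l d i hi, Nat.sub_zero]
      push_cast; ring

lemma applyMonomial_monomial (d e : Fin M →₀ ℕ) (c : k) :
    applyMonomial k d (monomial e c) =
      monomial (e - d) (c * ((∏ i, (e i).descFactorial (d i) : ℕ) : k)) := by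
  rw [applyMonomial, list_prod_apply_monomial _ (List.nodup_finRange M)]
  have h1 : ((List.finRange M).map (fun i => Finsupp.single i (d i))).sum
      = d := by
    rw [← List.sum_toFinset _ (List.nodup_finRange M), List.toFinset_finRange,
      Finsupp.univ_sum_single]
  have h2 : ((List.finRange M).map (fun i => (e i).descFactorial (d i))).prod
      = ∏ i, (e i).descFactorial (d i) := by
    rw [← List.prod_toFinset _ (List.nodup_finRange M), List.toFinset_finRange]
  rw [h1, h2]

end Stmt19Aux

namespace Stmt19Aux

variable {k : Type*} [Field k] {M : ℕ}

local notation "P" => MvPolynomial (Fin M) k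

lemma nat_descFactorial_add (a b n : ℕ) :
    n.descFactorial (a + b) = (n - b).descFactorial a * n.descFactorial b := by
  induction a with
  | zero => simp
  | succ a ih =>
    have : a + 1 + b = (a + b) + 1 := by ring
    rw [this, Nat.descFactorial_succ, ih, Nat.descFactorial_succ, Nat.sub_sub, add_comm b a]
    ring

lemma endo_apply_eq_of_monomial {F G : Module.End k P}
    (h : ∀ e c, F (monomial e c) = G (monomial e c)) (p : P) : F p = G p := by
  rw [p.as_sum, map_sum, map_sum]
  exact Finset.sum_congr rfl fun e _ => h e _

lemma applyMonomial_add (d e : Fin M →₀ ℕ) (p : P) :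
    applyMonomial k (d + e) p = applyMonomial k d (applyMonomial k e p) := by
  have := endo_apply_eq_of_monomial (F := applyMonomial k (d + e))
    (G := applyMonomial k d * applyMonomial k e) (fun m c => ?_) p
  · rw [this, Module.End.mul_apply]
  rw [Module.End.mul_apply, applyMonomial_monomial, applyMonomial_monomial, applyMonomial_monomial]
  congr 1
  · rw [tsub_tsub, add_comm]
  · rw [mul_assoc, ← Nat.cast_mul, ← Finset.prod_mul_distrib]
    congr 2
    refine Finset.prod_congr rfl fun i _ => ?_
    rw [Finsupp.add_apply, nat_descFactorial_add (d i) (e i) (m i), Finsupp.tsub_apply, mul_comm]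

lemma dstar_def (f g : P) : dstar k f g = (AddMonoidAlgebra.coeff f).sum fun d c => c • applyMonomial k d g := by
  rw [sum_def]; rfl

lemma dstar_monomial (d : Fin M →₀ ℕ) (c : k) (g : P) :
    dstar k (monomial d c) g = c • applyMonomial k d g := by
  classical
  rw [dstar]
  rcases eq_or_ne c 0 with rfl | hc
  · simp
  · rw [support_monomial, if_neg hc, Finset.sum_singleton, coeff_monomial, if_pos rfl]

lemma dstar_add_left (f₁ f₂ g : P) :
    dstar k (f₁ + f₂) g = dstar k f₁ g + dstar k f₂ g := by
  rw [dstar_def, dstar_def, dstar_def]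
  have hc : AddMonoidAlgebra.coeff (f₁ + f₂) = AddMonoidAlgebra.coeff f₁ + AddMonoidAlgebra.coeff f₂ := rfl
  rw [hc]
  exact Finsupp.sum_add_index' (fun d => zero_smul k _) (fun d a b => add_smul a b _)

lemma dstar_add_right (f g₁ g₂ : P) :
    dstar k f (g₁ + g₂) = dstar k f g₁ + dstar k f g₂ := by
  simp only [dstar, map_add, smul_add, Finset.sum_add_distrib]

lemma dstar_smul_right (f : P) (c : k) (g : P) :
    dstar k f (c • g) = c • dstar k f g := by
  simp only [dstar, map_smul, Finset.smul_sum, smul_comm c]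

lemma dstar_zero_right (f : P) : dstar k f 0 = 0 := by
  simp [dstar]

lemma dstar_mul (f₁ f₂ g : P) : dstar k (f₁ * f₂) g = dstar k f₁ (dstar k f₂ g) := by
  induction f₁ using MvPolynomial.induction_on' with
  | add p q hp hq => rw [add_mul, dstar_add_left, hp, hq, dstar_add_left]
  | monomial d c =>
    induction f₂ using MvPolynomial.induction_on' with
    | add p q hp hq =>
      rw [mul_add, dstar_add_left, hp, hq, dstar_add_left, dstar_add_right]
    | monomial e c' =>
      rw [monomial_mul, dstar_monomial, dstar_monomial, dstar_monomial, applyMonomial_add,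
        map_smul]
      rw [smul_smul, mul_comm c c']

lemma dstar_one_left (g : P) : dstar k 1 g = g := by
  have h1 : (1 : P) = monomial 0 1 := by simp [monomial_zero']
  rw [h1, dstar_monomial, one_smul, applyMonomial]
  have : ∀ E ∈ (List.finRange M).map (fun i =>
      ((pderiv i).toLinearMap : Module.End k P) ^ ((0 : Fin M →₀ ℕ) i)), E = 1 := by
    intro E hE
    simp only [List.mem_map] at hE
    obtain ⟨i, _, rfl⟩ := hE
    simp
  rw [List.prod_eq_one this]
  rfl

end Stmt19Aux

namespace Stmt19Aux

variable {k : Type*} [Field k] {M : ℕ}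

local notation "P" => MvPolynomial (Fin M) k

lemma weight_le_totalDegree {p : P} {e : Fin M →₀ ℕ} (h : e ∈ p.support) :
    ∑ i, e i ≤ p.totalDegree := by
  have := le_totalDegree h
  rwa [Finsupp.sum_fintype _ _ (fun _ => rfl)] at this

lemma applyMonomial_eq_zero {g : P} {d : Fin M →₀ ℕ} (h : g.totalDegree < ∑ i, d i) :
    applyMonomial k d g = 0 := by
  conv_lhs => rw [g.as_sum]
  rw [map_sum]
  refine Finset.sum_eq_zero fun e he => ?_
  rw [applyMonomial_monomial]
  have hlt : ∑ i, e i < ∑ i, d i := lt_of_le_of_lt (weight_le_totalDegree he) h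
  obtain ⟨i, hi⟩ : ∃ i, e i < d i := by
    by_contra hc
    push_neg at hc
    exact absurd (Finset.sum_le_sum fun i _ => hc i) (not_le.mpr hlt)
  rw [Finset.prod_eq_zero (Finset.mem_univ i) (Nat.descFactorial_eq_zero_iff_lt.mpr hi)]
  simp

lemma eq_of_le_of_weight_le {d e : Fin M →₀ ℕ} (hle : d ≤ e) (hw : ∑ i, e i ≤ ∑ i, d i) :
    d = e := by
  by_contra hne
  have hle' : ∀ i, d i ≤ e i := fun i => Finsupp.le_def.mp hle i
  obtain ⟨i, hi⟩ : ∃ i, d i < e i := by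
    by_contra hc
    push_neg at hc
    exact hne (Finsupp.ext fun i => le_antisymm (hle' i) (hc i))
  exact absurd (Finset.sum_lt_sum (fun i _ => hle' i) ⟨i, Finset.mem_univ i, hi⟩)
    (not_lt.mpr hw)

lemma applyMonomial_top {g : P} {d : Fin M →₀ ℕ} (hd : d ∈ g.support)
    (hw : g.totalDegree ≤ ∑ i, d i) :
    applyMonomial k d g = C (coeff d g * ((∏ i, (d i).factorial : ℕ) : k)) := by
  conv_lhs => rw [g.as_sum]
  rw [map_sum]
  rw [Finset.sum_eq_single_of_mem d hd]
  · rw [applyMonomial_monomial, tsub_self]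
    rw [C_apply]
    congr 2
    exact congrArg Nat.cast (Finset.prod_congr rfl fun i _ => Nat.descFactorial_self _)
  · intro e he hne
    rw [applyMonomial_monomial]
    obtain ⟨i, hi⟩ : ∃ i, e i < d i := by
      by_contra hc
      push_neg at hc
      have hle : d ≤ e := Finsupp.le_def.mpr hc
      exact hne (eq_of_le_of_weight_le hle (le_trans (weight_le_totalDegree he) hw)).symm
    rw [Finset.prod_eq_zero (Finset.mem_univ i) (Nat.descFactorial_eq_zero_iff_lt.mpr hi)]
    simp

lemma constantCoeff_applyMonomial (d : Fin M →₀ ℕ) (p : P) :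
    constantCoeff (applyMonomial k d p) = coeff d p * ((∏ i, (d i).factorial : ℕ) : k) := by
  classical
  conv_lhs => rw [p.as_sum]
  rw [map_sum, map_sum]
  simp only [applyMonomial_monomial, constantCoeff_monomial]
  rw [Finset.sum_eq_single d]
  · rw [if_pos (tsub_self d)]
    have h : (∏ i, (d i).descFactorial (d i)) = ∏ i, (d i).factorial :=
      Finset.prod_congr rfl fun i _ => Nat.descFactorial_self (d i)
    rw [h]
  · intro e he hne
    by_cases hle : d ≤ e
    · rw [if_neg]
      intro h0
      exact hne (le_antisymm (tsub_eq_zero_iff_le.mp h0) hle)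
    · obtain ⟨i, hi⟩ : ∃ i, e i < d i := by
        by_contra hc
        push_neg at hc
        exact hle (Finsupp.le_def.mpr hc)
      rw [Finset.prod_eq_zero (Finset.mem_univ i) (Nat.descFactorial_eq_zero_iff_lt.mpr hi)]
      simp
  · intro hd
    rw [notMem_support_iff.mp hd]
    simp

lemma applyMonomial_single_one (i : Fin M) (p : P) :
    applyMonomial k (Finsupp.single i 1) p = pderiv i p := by
  have := endo_apply_eq_of_monomial (F := applyMonomial k (Finsupp.single i 1))
    (G := (pderiv i).toLinearMap) (fun e c => ?_) p
  · exact this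
  rw [applyMonomial_monomial]
  erw [pderiv_monomial]
  have hprod : (∏ j, (e j).descFactorial ((Finsupp.single i 1) j)) = e i := by
    rw [Finset.prod_eq_single i
      (fun j _ hj => by
        rw [Finsupp.single_apply, if_neg (fun h => hj h.symm), Nat.descFactorial_zero])
      (fun h => absurd (Finset.mem_univ i) h)]
    rw [Finsupp.single_apply, if_pos rfl, Nat.descFactorial_one]
  rw [hprod]

end Stmt19Aux

namespace Stmt19Aux

variable {k : Type*} [Field k] {M : ℕ}

local notation "P" => MvPolynomial (Fin M) k

lemma applyMonomial_zero (p : P) : applyMonomial k (0 : Fin M →₀ ℕ) p = p := by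
  rw [applyMonomial]
  have h : ∀ E ∈ (List.finRange M).map (fun i =>
      ((pderiv i).toLinearMap : Module.End k P) ^ ((0 : Fin M →₀ ℕ) i)), E = 1 := by
    intro E hE
    simp only [List.mem_map] at hE
    obtain ⟨i, _, rfl⟩ := hE
    simp
  rw [List.prod_eq_one h]
  rfl

lemma prod_factorial_ne_zero [CharZero k] (d : Fin M →₀ ℕ) :
    ((∏ i, (d i).factorial : ℕ) : k) ≠ 0 :=
  Nat.cast_ne_zero.mpr (Finset.prod_pos fun i _ => Nat.factorial_pos _).ne'

lemma eq_C_of_pderiv_eq_zero [CharZero k] {p : P} (h : ∀ i, pderiv i p = 0) :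
    p = C (constantCoeff p) := by
  classical
  apply MvPolynomial.ext
  intro d
  rcases eq_or_ne d 0 with rfl | hd
  · rw [constantCoeff_eq, coeff_C, if_pos rfl]
  · rw [coeff_C, if_neg (fun hh => hd hh.symm)]
    obtain ⟨i, hi⟩ : ∃ i, d i ≠ 0 := by
      by_contra hc
      push_neg at hc
      exact hd (Finsupp.ext hc)
    have hle : Finsupp.single i 1 ≤ d := by
      rw [Finsupp.single_le_iff]
      omega
    have hdec : d = (d - Finsupp.single i 1) + Finsupp.single i 1 :=
      (tsub_add_cancel_of_le hle).symm
    have hzero : applyMonomial k d p = 0 := by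
      rw [hdec, applyMonomial_add, applyMonomial_single_one, h i, map_zero]
    have := constantCoeff_applyMonomial (k := k) d p
    rw [hzero, map_zero] at this
    exact (mul_eq_zero.mp this.symm).resolve_right (prod_factorial_ne_zero d)

variable (k) in
noncomputable def annIdeal (g : P) : Ideal P where
  carrier := {f | dstar k f g = 0}
  zero_mem' := by simp [dstar]
  add_mem' := fun {a b} ha hb => by
    simp only [Set.mem_setOf_eq] at *
    rw [dstar_add_left, ha, hb, add_zero]
  smul_mem' := fun p f hf => by
    simp only [Set.mem_setOf_eq, smul_eq_mul] at *
    rw [dstar_mul, hf, dstar_zero_right]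

lemma mem_annIdeal_iff {g f : P} : f ∈ annIdeal k g ↔ dstar k f g = 0 := Iff.rfl

lemma mem_span_X_iff {f : P} :
    f ∈ Ideal.span (Set.range (X : Fin M → P)) ↔ constantCoeff f = 0 := by
  constructor
  · intro hf
    have hle : Ideal.span (Set.range (X : Fin M → P)) ≤
        RingHom.ker (constantCoeff : P →+* k) := by
      rw [Ideal.span_le]
      rintro _ ⟨i, rfl⟩
      simp [RingHom.mem_ker]
    exact hle hf
  · intro hf
    rw [← Set.image_univ, mem_ideal_span_X_image]
    intro m hm
    obtain ⟨i, hi⟩ : ∃ i, m i ≠ 0 := by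
      by_contra hc
      push_neg at hc
      have hm0 : m = 0 := Finsupp.ext hc
      rw [mem_support_iff, hm0] at hm
      rw [constantCoeff_eq] at hf
      exact hm hf
    exact ⟨i, Set.mem_univ i, hi⟩

end Stmt19Aux

namespace Stmt19Aux

variable {k : Type*} [Field k] {M : ℕ}

local notation "P" => MvPolynomial (Fin M) k

variable (k M) in
noncomputable def lowDeg (n : ℕ) : Ideal P where
  carrier := {f | ∀ e ∈ f.support, n ≤ ∑ i, e i}
  zero_mem' := by simp
  add_mem' := fun {a b} ha hb e he => by
    classical
    rcases Finset.mem_union.mp (support_add he) with h | h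
    · exact ha e h
    · exact hb e h
  smul_mem' := fun p f hf e he => by
    classical
    rw [smul_eq_mul] at he
    obtain ⟨u, hu, v, hv, rfl⟩ := Finset.mem_add.mp (support_mul p f he)
    have := hf v hv
    have h2 : ∑ i, (u + v) i = ∑ i, u i + ∑ i, v i := by
      simp [Finsupp.add_apply, Finset.sum_add_distrib]
    omega

lemma mul_mem_lowDeg {m n : ℕ} {a b : P} (ha : a ∈ lowDeg k M m) (hb : b ∈ lowDeg k M n) :
    a * b ∈ lowDeg k M (m + n) := by
  classical
  intro e he
  obtain ⟨u, hu, v, hv, rfl⟩ := Finset.mem_add.mp (support_mul a b he)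
  have h1 := ha u hu
  have h2 := hb v hv
  have h3 : ∑ i, (u + v) i = ∑ i, u i + ∑ i, v i := by
    simp [Finsupp.add_apply, Finset.sum_add_distrib]
  omega

lemma span_X_le_lowDeg_one :
    Ideal.span (Set.range (X : Fin M → P)) ≤ lowDeg k M 1 := by
  rw [Ideal.span_le]
  rintro _ ⟨i, rfl⟩
  intro e he
  rw [support_X] at he
  rw [Finset.mem_singleton.mp he]
  rw [Finset.sum_eq_single i (fun j _ hj => Finsupp.single_apply.trans (if_neg (fun h => hj h.symm)))
    (fun h => absurd (Finset.mem_univ i) h)]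
  simp

lemma span_X_pow_le_lowDeg (n : ℕ) :
    (Ideal.span (Set.range (X : Fin M → P))) ^ n ≤ lowDeg k M n := by
  induction n with
  | zero => intro f _ e _; exact Nat.zero_le _
  | succ n ih =>
    rw [pow_succ]
    refine Ideal.mul_le.mpr fun a ha b hb => ?_
    exact mul_mem_lowDeg (ih ha) (span_X_le_lowDeg_one hb)

lemma coeff_applyMonomial_eq_zero {g : P} {d d₀ : Fin M →₀ ℕ} (hd : d ≠ 0)
    (h₀ : g.totalDegree ≤ ∑ i, d₀ i) :
    coeff d₀ (applyMonomial k d g) = 0 := by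
  classical
  conv_lhs => rw [g.as_sum, map_sum]
  rw [coeff_sum]
  refine Finset.sum_eq_zero fun e he => ?_
  rw [applyMonomial_monomial, coeff_monomial]
  rcases eq_or_ne (e - d) d₀ with heq | hne
  · rw [if_pos heq]
    rcases eq_or_ne (∏ i, (e i).descFactorial (d i)) 0 with hp | hp
    · rw [hp]; simp
    · exfalso
      have hle : ∀ i, d i ≤ e i := by
        intro i
        by_contra hlt
        exact hp (Finset.prod_eq_zero (Finset.mem_univ i)
          (Nat.descFactorial_eq_zero_iff_lt.mpr (not_le.mp hlt)))
      have hsum : ∑ i, (e - d) i + ∑ i, d i = ∑ i, e i := by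
        rw [← Finset.sum_add_distrib]
        exact Finset.sum_congr rfl fun i _ => by
          rw [Finsupp.tsub_apply]; have := hle i; omega
      have hdpos : 0 < ∑ i, d i := by
        obtain ⟨i, hi⟩ : ∃ i, d i ≠ 0 := by
          by_contra hc
          push_neg at hc
          exact hd (Finsupp.ext hc)
        exact Finset.sum_pos' (fun j _ => Nat.zero_le _) ⟨i, Finset.mem_univ i, Nat.pos_of_ne_zero hi⟩
      have hwe := weight_le_totalDegree he
      rw [heq] at hsum
      omega
  · rw [if_neg hne]

lemma coeff_dstar_eq_zero {h g : P} (hh : constantCoeff h = 0) {d₀ : Fin M →₀ ℕ}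
    (h₀ : g.totalDegree ≤ ∑ i, d₀ i) :
    coeff d₀ (dstar k h g) = 0 := by
  rw [dstar, coeff_sum]
  refine Finset.sum_eq_zero fun d hd => ?_
  have hd0 : d ≠ 0 := by
    rintro rfl
    rw [mem_support_iff] at hd
    rw [constantCoeff_eq] at hh
    exact hd hh
  rw [coeff_smul, coeff_applyMonomial_eq_zero hd0 h₀, smul_zero]

lemma prod_pow_mem_span_pow {R : Type*} [CommRing R] (J : Ideal R) (s : Finset (Fin M))
    (f : Fin M → R) (n : Fin M → ℕ) (hf : ∀ i ∈ s, f i ∈ J) :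
    (∏ i ∈ s, f i ^ n i) ∈ J ^ (∑ i ∈ s, n i) := by
  classical
  induction s using Finset.cons_induction with
  | empty => simp [Ideal.one_eq_top]
  | cons i s hi ih =>
    rw [Finset.prod_cons, Finset.sum_cons, pow_add]
    exact Ideal.mul_mem_mul (Ideal.pow_mem_pow (hf i (Finset.mem_cons_self i s)) (n i))
      (ih fun j hj => hf j (Finset.mem_cons_of_mem hj))

end Stmt19Aux

open Stmt19Aux

set_option synthInstance.maxHeartbeats 1000000 in
set_option maxHeartbeats 2000000 in
/-- Let `g ∈ k[x₁,…,x_M]` be a nonzero polynomial over a field `k` of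
characteristic `0`. Then `k[x₁,…,x_M]/Ann(g)`, where
`Ann(g) = {f : f(∂₁,…,∂_M)(g) = 0}`, is a local Artinian Gorenstein algebra of socle
degree `deg g`: its maximal ideal is the image of `(x₁,…,x_M)`, the `(deg g + 1)`-st
power of the maximal ideal vanishes but not the `deg g`-th, and the socle (annihilator
of the maximal ideal) is a 1-dimensional `k`-vector space. -/
theorem stmt19 (k : Type*) [Field k] [CharZero k] (M : ℕ)
    (g : MvPolynomial (Fin M) k) (hg : g ≠ 0) :
    ∃ I : Ideal (MvPolynomial (Fin M) k),
      (∀ f : MvPolynomial (Fin M) k, f ∈ I ↔ dstar k f g = 0) ∧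
      IsLocalRing (MvPolynomial (Fin M) k ⧸ I) ∧
      IsArtinianRing (MvPolynomial (Fin M) k ⧸ I) ∧
      ∀ m : Ideal (MvPolynomial (Fin M) k ⧸ I),
        m = Ideal.map (Ideal.Quotient.mk I) (Ideal.span (Set.range X)) →
        (m.IsMaximal ∧
         m ^ (g.totalDegree + 1) = ⊥ ∧
         m ^ g.totalDegree ≠ ⊥ ∧
         Module.finrank k ((Submodule.colon (⊥ : Ideal (MvPolynomial (Fin M) k ⧸ I)) (m : Set (MvPolynomial (Fin M) k ⧸ I))).restrictScalars k) = 1) := by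
  classical
  set D := g.totalDegree with hD
  -- the top monomial of g
  obtain ⟨d₀, hd₀s, hsup⟩ := Finset.exists_mem_eq_sup g.support (support_nonempty.mpr hg)
    (fun s : Fin M →₀ ℕ => s.sum fun _ e => e)
  have hd₀w : ∑ i, d₀ i = D := by
    rw [hD, totalDegree, hsup, Finsupp.sum_fintype _ _ (fun _ => rfl)]
  have hd₀c : coeff d₀ g ≠ 0 := mem_support_iff.mp hd₀s
  set I : Ideal (MvPolynomial (Fin M) k) := annIdeal k g with hI
  set mk0 := Ideal.Quotient.mk I with hmk0
  -- Artinianness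
  have hfin : Module.Finite k (MvPolynomial (Fin M) k ⧸ I) := by
    set b : Fin M →₀ ℕ := Finsupp.equivFunOnFinite.symm (fun _ => D) with hb
    refine ⟨⟨(Finset.Iic b).image (fun e => mk0 (monomial e 1)), ?_⟩⟩
    rw [eq_top_iff]
    intro q _
    obtain ⟨f, rfl⟩ := Ideal.Quotient.mk_surjective q
    rw [show f = ∑ e ∈ f.support, monomial e (coeff e f) from f.as_sum, map_sum]
    refine Submodule.sum_mem _ fun e _ => ?_
    have heq : mk0 (monomial e (coeff e f)) = coeff e f • mk0 (monomial e 1) := by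
      have h1 : (monomial e (coeff e f)) = coeff e f • monomial e (1 : k) := by
        rw [smul_monomial, smul_eq_mul, mul_one]
      rw [h1, hmk0, ← Ideal.Quotient.mkₐ_eq_mk k, map_smul]
    rw [heq]
    refine Submodule.smul_mem _ _ ?_
    rcases le_or_gt (∑ i, e i) D with hle | hlt
    · apply Submodule.subset_span
      refine Finset.mem_coe.mpr (Finset.mem_image.mpr ⟨e, ?_, rfl⟩)
      rw [Finset.mem_Iic]
      intro i
      calc e i ≤ ∑ j, e j := Finset.single_le_sum (fun j _ => Nat.zero_le _) (Finset.mem_univ i)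
        _ ≤ D := hle
    · have hmem : monomial e (1 : k) ∈ I := by
        rw [hI, mem_annIdeal_iff, dstar_monomial, applyMonomial_eq_zero hlt, smul_zero]
      rw [Ideal.Quotient.eq_zero_iff_mem.mpr hmem]
      exact Submodule.zero_mem _
  have hart : IsArtinianRing (MvPolynomial (Fin M) k ⧸ I) := IsArtinianRing.of_finite k _
  -- constant coefficient of elements of I vanishes
  have hIker : ∀ f ∈ I, constantCoeff f = 0 := by
    intro f hf
    set c := constantCoeff f with hc
    have hsplit : f = C c + (f - C c) := by ring
    have hcc : constantCoeff (f - C c) = 0 := by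
      rw [map_sub, constantCoeff_C, sub_self]
    have h0 : dstar k f g = 0 := hf
    rw [hsplit, dstar_add_left] at h0
    have hCc : dstar k (C c) g = c • g := by
      rw [C_apply, dstar_monomial, applyMonomial_zero]
    have := congrArg (coeff d₀) h0
    rw [coeff_add, hCc, coeff_smul, coeff_dstar_eq_zero hcc (le_of_eq hd₀w.symm),
      add_zero, coeff_zero, smul_eq_mul] at this
    exact (mul_eq_zero.mp this).resolve_right hd₀c
  -- the evaluation map to k
  set ev : (MvPolynomial (Fin M) k ⧸ I) →+* k := Ideal.Quotient.lift I constantCoeff hIker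
    with hev
  have hevsurj : Function.Surjective ev := fun x =>
    ⟨mk0 (C x), by rw [hev, hmk0, Ideal.Quotient.lift_mk, constantCoeff_C]⟩
  set m₀ : Ideal (MvPolynomial (Fin M) k ⧸ I) :=
    Ideal.map mk0 (Ideal.span (Set.range X)) with hm₀
  have hm₀ker : m₀ = RingHom.ker ev := by
    apply le_antisymm
    · rw [hm₀, Ideal.map_span, Ideal.span_le]
      rintro _ ⟨_, ⟨i, rfl⟩, rfl⟩
      rw [SetLike.mem_coe, RingHom.mem_ker, hev, Ideal.Quotient.lift_mk]
      simp
    · intro x hx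
      obtain ⟨f, rfl⟩ := Ideal.Quotient.mk_surjective x
      rw [RingHom.mem_ker, hev, Ideal.Quotient.lift_mk] at hx
      exact Ideal.mem_map_of_mem _ (mem_span_X_iff.mpr hx)
  have hmax : m₀.IsMaximal := by
    rw [hm₀ker]
    exact RingHom.ker_isMaximal_of_surjective ev hevsurj
  -- vanishing of high powers
  have hpow : m₀ ^ (D + 1) = ⊥ := by
    rw [hm₀, ← Ideal.map_pow, Ideal.map_eq_bot_iff_le_ker, Ideal.mk_ker]
    intro f hf
    have hf' := span_X_pow_le_lowDeg (D + 1) hf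
    rw [hI, mem_annIdeal_iff, dstar]
    refine Finset.sum_eq_zero fun d hd => ?_
    have : D < ∑ i, d i := hf' d hd
    rw [applyMonomial_eq_zero this, smul_zero]
  -- non-vanishing of the D-th power
  have htop : applyMonomial k d₀ g = C (coeff d₀ g * ((∏ i, (d₀ i).factorial : ℕ) : k)) :=
    applyMonomial_top hd₀s (le_of_eq hd₀w.symm)
  set c₀ : k := coeff d₀ g * ((∏ i, (d₀ i).factorial : ℕ) : k) with hc₀
  have hc₀ne : c₀ ≠ 0 := mul_ne_zero hd₀c (prod_factorial_ne_zero d₀)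
  have hmono : monomial d₀ (1 : k) ∉ I := by
    rw [hI, mem_annIdeal_iff, dstar_monomial, one_smul, htop]
    intro hC
    exact hc₀ne (by simpa using congrArg constantCoeff hC)
  have hmonopow : monomial d₀ (1 : k) ∈
      (Ideal.span (Set.range (X : Fin M → MvPolynomial (Fin M) k))) ^ D := by
    have hm : monomial d₀ (1 : k) = ∏ i, X i ^ d₀ i := by
      rw [monomial_eq, map_one, one_mul, Finsupp.prod_fintype _ _ (fun i => pow_zero _)]
    rw [hm, ← hd₀w]
    exact prod_pow_mem_span_pow _ Finset.univ _ _ (fun i _ => Ideal.subset_span ⟨i, rfl⟩)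
  have hpowne : m₀ ^ D ≠ ⊥ := by
    intro hbot
    rw [hm₀, ← Ideal.map_pow] at hbot
    have : mk0 (monomial d₀ (1 : k)) ∈ (⊥ : Ideal (MvPolynomial (Fin M) k ⧸ I)) := by
      rw [← hbot]
      exact Ideal.mem_map_of_mem _ hmonopow
    rw [Ideal.mem_bot, Ideal.Quotient.eq_zero_iff_mem] at this
    exact hmono this
  -- local ring
  have hlocal : IsLocalRing (MvPolynomial (Fin M) k ⧸ I) := by
    refine IsLocalRing.of_unique_max_ideal ⟨m₀, hmax, fun J hJ => ?_⟩
    have hle : m₀ ≤ J := by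
      have : m₀ ^ (D + 1) ≤ J := by rw [hpow]; exact bot_le
      exact Ideal.IsPrime.le_of_pow_le (hP := hJ.isPrime) this
    exact (hmax.eq_of_le hJ.ne_top hle).symm
  -- socle element
  set f₀ : MvPolynomial (Fin M) k := monomial d₀ c₀⁻¹ with hf₀def
  have hf₀ : dstar k f₀ g = 1 := by
    rw [hf₀def, dstar_monomial, htop, smul_eq_C_mul, ← C_mul, inv_mul_cancel₀ hc₀ne]
    rfl
  set s₀ := mk0 f₀ with hs₀def
  have hs₀ne : s₀ ≠ 0 := by
    rw [hs₀def, Ne, Ideal.Quotient.eq_zero_iff_mem, hI, mem_annIdeal_iff, hf₀]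
    exact one_ne_zero
  -- socle is spanned by s₀
  have hsocle : (Submodule.colon (⊥ : Ideal (MvPolynomial (Fin M) k ⧸ I)) (m₀ : Set (MvPolynomial (Fin M) k ⧸ I))).restrictScalars k
      = Submodule.span k {s₀} := by
    apply le_antisymm
    · intro q hq
      rw [Submodule.restrictScalars_mem, Submodule.mem_colon] at hq
      obtain ⟨f, rfl⟩ := Ideal.Quotient.mk_surjective q
      have hpd : ∀ i, pderiv i (dstar k f g) = 0 := by
        intro i
        have hXi : mk0 (X i) ∈ m₀ := Ideal.mem_map_of_mem _ (Ideal.subset_span ⟨i, rfl⟩)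
        have := hq _ hXi
        rw [smul_eq_mul, ← map_mul, Submodule.mem_bot, Ideal.Quotient.eq_zero_iff_mem,
          mul_comm, hI, mem_annIdeal_iff, dstar_mul] at this
        rw [← applyMonomial_single_one, ← one_smul k (applyMonomial k (Finsupp.single i 1)
          (dstar k f g)), ← dstar_monomial]
        exact this
      have hconst : dstar k f g = C (constantCoeff (dstar k f g)) :=
        eq_C_of_pderiv_eq_zero hpd
      set c : k := constantCoeff (dstar k f g) with hcdef
      have hmem : f - c • f₀ ∈ I := by
        rw [hI, mem_annIdeal_iff]
        have hsmul : dstar k (c • f₀) g = C c := by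
          rw [smul_eq_C_mul, dstar_mul, hf₀, C_apply, dstar_monomial, applyMonomial_zero,
            smul_eq_C_mul, mul_one]
          exact C_apply
        have hadd : dstar k (f - c • f₀) g + dstar k (c • f₀) g = dstar k f g := by
          rw [← dstar_add_left, sub_add_cancel]
        rw [hsmul, hconst] at hadd
        exact add_right_cancel (hadd.trans (zero_add (C c)).symm)
      rw [Submodule.mem_span_singleton]
      refine ⟨c, ?_⟩
      have : mk0 (f - c • f₀) = 0 := Ideal.Quotient.eq_zero_iff_mem.mpr hmem
      have hms : mk0 (c • f₀) = c • s₀ := by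
        rw [hs₀def, hmk0, ← Ideal.Quotient.mkₐ_eq_mk k, map_smul]
      rw [map_sub, hms, sub_eq_zero] at this
      exact this.symm
    · rw [Submodule.span_le, Set.singleton_subset_iff, SetLike.mem_coe,
        Submodule.restrictScalars_mem, Submodule.mem_colon]
      intro p hp
      obtain ⟨h, hh, rfl⟩ := Ideal.mem_map_iff_of_surjective _ Ideal.Quotient.mk_surjective
        |>.mp hp
      rw [hs₀def, smul_eq_mul, ← map_mul, Submodule.mem_bot, Ideal.Quotient.eq_zero_iff_mem,
        hI, mem_annIdeal_iff, mul_comm, dstar_mul, hf₀]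
      -- dstar h 1 = 0 since h has zero constant coefficient
      rw [dstar]
      refine Finset.sum_eq_zero fun d hd => ?_
      have hd0 : d ≠ 0 := by
        rintro rfl
        rw [mem_support_iff] at hd
        have := mem_span_X_iff.mp hh
        rw [constantCoeff_eq] at this
        exact hd this
      have hdpos : 0 < ∑ i, d i := by
        obtain ⟨i, hi⟩ : ∃ i, d i ≠ 0 := by
          by_contra hc
          push_neg at hc
          exact hd0 (Finsupp.ext hc)
        exact Finset.sum_pos' (fun j _ => Nat.zero_le _)
          ⟨i, Finset.mem_univ i, Nat.pos_of_ne_zero hi⟩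
      have h1 : (1 : MvPolynomial (Fin M) k).totalDegree < ∑ i, d i := by
        rw [totalDegree_one]; exact hdpos
      rw [applyMonomial_eq_zero h1, smul_zero]
  refine ⟨I, fun f => Iff.rfl, hlocal, hart, fun m hm => ?_⟩
  rw [hm]
  refine ⟨hmax, hpow, hpowne, ?_⟩
  rw [show (Submodule.colon (⊥ : Ideal (MvPolynomial (Fin M) k ⧸ I)) ((Ideal.map (Ideal.Quotient.mk I) (Ideal.span (Set.range X)) :
    Ideal (MvPolynomial (Fin M) k ⧸ I)) : Set (MvPolynomial (Fin M) k ⧸ I))).restrictScalars k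
      = Submodule.span k {s₀} from hsocle]
  exact finrank_span_singleton hs₀ne
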